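/- Let G be a finite simple graph and x ≥ 1 an integer. Consider the ordering σ of the vertices obtained by repeatedly deleting a vertex whose x-th neighborhood in the current remaining induced subgraph has minimum size. Then σ is an x-degeneracy ordering of G of width exactly the x-degeneracy of G; that is, the maximum over all steps of the minimum x-th-neighborhood size encountered equals the minimum width over all x-degeneracy orderings of G. -/
import Mathlib


/-- The `x`-th neighborhood of `v` in `G`: vertices `u` with `1 ≤ dist_G(u,v) ≤ x`. -/
def xNbhd {V : Type*} (G : SimpleGraph V) (x : ℕ) (v : V) : Set V :=
  {u | 1 ≤ G.edist u v ∧ G.edist u v ≤ x}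

/-- The set of vertices appearing at or after `v` in the ordering `σ`. -/
def laterSet {V : Type*} (σ : V → ℕ) (v : V) : Set V := {u | σ v ≤ σ u}

theorem mem_laterSet_self {V : Type*} (σ : V → ℕ) (v : V) : v ∈ laterSet σ v :=
  le_refl (σ v)

/-- `σ` (an injective enumeration, i.e. a linear ordering of the vertices) is an
`x`-degeneracy ordering of `G` of width `d`. -/
def IsXDegenOrdering {V : Type*} (G : SimpleGraph V) (x d : ℕ) (σ : V → ℕ) : Prop :=
  Function.Injective σ ∧
  ∀ v : V, (xNbhd (G.induce (laterSet σ v)) x ⟨v, mem_laterSet_self σ v⟩).ncard ≤ d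

/-- The greedy ordering: at each step, the vertex removed next (i.e. the earliest
remaining vertex) has an `x`-th neighborhood of minimum size in the subgraph induced
by the remaining vertices. -/
def IsGreedyOrdering {V : Type*} (G : SimpleGraph V) (x : ℕ) (σ : V → ℕ) : Prop :=
  Function.Injective σ ∧
  ∀ v : V, ∀ u, ∀ hu : u ∈ laterSet σ v,
    (xNbhd (G.induce (laterSet σ v)) x ⟨v, mem_laterSet_self σ v⟩).ncard ≤
      (xNbhd (G.induce (laterSet σ v)) x ⟨u, hu⟩).ncard


open SimpleGraph in
lemma edist_induce_mono' {V : Type*} (G : SimpleGraph V) {S T : Set V} (h : S ⊆ T)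
    (u v : S) :
    (G.induce T).edist (Set.inclusion h u) (Set.inclusion h v) ≤ (G.induce S).edist u v := by
  by_cases hr : (G.induce S).Reachable u v
  · obtain ⟨p, hp⟩ := hr.exists_walk_length_eq_edist
    rw [← hp, ← SimpleGraph.Walk.length_map (induceHomOfLE G h).toHom (p := p)]
    exact SimpleGraph.edist_le _
  · rw [SimpleGraph.edist_eq_top_of_not_reachable hr]; exact le_top

lemma xNbhd_mono' {V : Type*} [Fintype V] (G : SimpleGraph V) (x : ℕ) {S T : Set V}
    (h : S ⊆ T) (v : V) (hv : v ∈ S) :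
    (xNbhd (G.induce S) x ⟨v, hv⟩).ncard ≤ (xNbhd (G.induce T) x ⟨v, h hv⟩).ncard := by
  classical
  have hinj : Function.Injective (Set.inclusion h) := Set.inclusion_injective h
  have himg : (Set.inclusion h) '' (xNbhd (G.induce S) x ⟨v, hv⟩) ⊆
      xNbhd (G.induce T) x ⟨v, h hv⟩ := by
    rintro _ ⟨u, ⟨h1, h2⟩, rfl⟩
    constructor
    · rcases u with ⟨u, hu⟩
      have hne : (⟨u, hu⟩ : S) ≠ ⟨v, hv⟩ := by
        intro hEq
        rw [hEq] at h1
        simp at h1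
      have : (Set.inclusion h ⟨u, hu⟩ : T) ≠ ⟨v, h hv⟩ := by
        intro hEq
        apply hne
        have h3 : (u : V) = v := congrArg (Subtype.val : T → V) hEq
        exact Subtype.ext h3
      exact Order.one_le_iff_pos.mpr (SimpleGraph.edist_pos_of_ne this)
    · calc (G.induce T).edist (Set.inclusion h u) ⟨v, h hv⟩
          = (G.induce T).edist (Set.inclusion h u) (Set.inclusion h ⟨v, hv⟩) := rfl
        _ ≤ (G.induce S).edist u ⟨v, hv⟩ := edist_induce_mono' G h u ⟨v, hv⟩
        _ ≤ x := h2
  calc (xNbhd (G.induce S) x ⟨v, hv⟩).ncard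
      = ((Set.inclusion h) '' (xNbhd (G.induce S) x ⟨v, hv⟩)).ncard :=
        (Set.ncard_image_of_injective _ hinj).symm
    _ ≤ (xNbhd (G.induce T) x ⟨v, h hv⟩).ncard :=
        Set.ncard_le_ncard himg (Set.toFinite _)

theorem stmt_1 {V : Type*} [Fintype V] (G : SimpleGraph V) (x : ℕ) (hx : 1 ≤ x)
    (σ : V → ℕ) (hσ : IsGreedyOrdering G x σ) :
    Finset.univ.sup
        (fun v : V => (xNbhd (G.induce (laterSet σ v)) x ⟨v, mem_laterSet_self σ v⟩).ncard) =
      sInf {d : ℕ | ∃ τ : V → ℕ, IsXDegenOrdering G x d τ} := by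
  classical
  set D := {d : ℕ | ∃ τ : V → ℕ, IsXDegenOrdering G x d τ} with hD
  set M := Finset.univ.sup
      (fun v : V => (xNbhd (G.induce (laterSet σ v)) x ⟨v, mem_laterSet_self σ v⟩).ncard) with hM
  have hMem : M ∈ D := by
    refine ⟨σ, hσ.1, fun v => ?_⟩
    rw [hM]
    exact Finset.le_sup
      (f := fun v : V => (xNbhd (G.induce (laterSet σ v)) x ⟨v, mem_laterSet_self σ v⟩).ncard)
      (Finset.mem_univ v)
  refine le_antisymm ?_ (Nat.sInf_le hMem)
  refine le_csInf ⟨M, hMem⟩ ?_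
  rintro d ⟨τ, hτinj, hτ⟩
  refine Finset.sup_le fun v _ => ?_
  -- pick the τ-minimal vertex of S := laterSet σ v
  set S := laterSet σ v with hS
  have hSfin : S.toFinset.Nonempty := ⟨v, Set.mem_toFinset.mpr (mem_laterSet_self σ v)⟩
  obtain ⟨w, hwS, hwmin⟩ := Finset.exists_min_image S.toFinset τ hSfin
  have hwS' : w ∈ S := Set.mem_toFinset.mp hwS
  have hsub : S ⊆ laterSet τ w := fun u hu => hwmin u (Set.mem_toFinset.mpr hu)
  calc (xNbhd (G.induce S) x ⟨v, mem_laterSet_self σ v⟩).ncard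
      ≤ (xNbhd (G.induce S) x ⟨w, hwS'⟩).ncard := hσ.2 v w hwS'
    _ ≤ (xNbhd (G.induce (laterSet τ w)) x ⟨w, hsub hwS'⟩).ncard :=
        xNbhd_mono' G x hsub w hwS'
    _ ≤ d := hτ w
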